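/- Let A be a real N×N matrix with entries in {-1, 0, 1}, and let A⁺ and A⁻ be as above with A = A⁺ - A⁻. With B_1 = A⁺, U_1 = A⁻, B_l = B_{l-1}A⁺ + U_{l-1}A⁻, and U_l = B_{l-1}A⁻ + U_{l-1}A⁺ for l ≥ 2, the signed Katz relevance matrix with combining function f(B_l, U_l) = B_l - U_l equals the unsigned Katz relevance applied to the signed adjacency matrix: for every real β and every positive integer γ, Σ_{l=1}^{γ} β^l (B_l - U_l) = Σ_{l=1}^{γ} β^l A^l. -/

import Mathlib

/-- Signed Katz with `f(B_l, U_l) = B_l - U_l` equals unsigned Katz on the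
signed adjacency matrix `A`. -/
theorem signed_katz_eq_unsigned_katz (N : ℕ) (A Ap An : Matrix (Fin N) (Fin N) ℝ)
    (hA : ∀ i j, A i j = -1 ∨ A i j = 0 ∨ A i j = 1)
    (hAp : ∀ i j, Ap i j = if A i j = 1 then 1 else 0)
    (hAn : ∀ i j, An i j = if A i j = -1 then 1 else 0)
    (B U : ℕ → Matrix (Fin N) (Fin N) ℝ)
    (hB1 : B 1 = Ap) (hU1 : U 1 = An)
    (hB : ∀ l, 2 ≤ l → B l = B (l - 1) * Ap + U (l - 1) * An)
    (hU : ∀ l, 2 ≤ l → U l = B (l - 1) * An + U (l - 1) * Ap)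
    (β : ℝ) (γ : ℕ) (hγ : 0 < γ) :
    ∑ l ∈ Finset.Icc 1 γ, β ^ l • (B l - U l) =
      ∑ l ∈ Finset.Icc 1 γ, β ^ l • A ^ l := by
  have hApAn : A = Ap - An := by
    ext i j
    rcases hA i j with h | h | h <;> simp [Matrix.sub_apply, hAp, hAn, h] <;> norm_num
  have key : ∀ l, 1 ≤ l → B l - U l = A ^ l := by
    intro l hl
    induction l with
    | zero => omega
    | succ n ih =>
      rcases Nat.eq_or_lt_of_le hl with h | h
      · simp [← h, hB1, hU1, hApAn]
      · have hn : 1 ≤ n := by omega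
        have h2 : 2 ≤ n + 1 := by omega
        rw [hB _ h2, hU _ h2]
        simp only [Nat.add_sub_cancel]
        have : B n * Ap + U n * An - (B n * An + U n * Ap)
            = (B n - U n) * (Ap - An) := by noncomm_ring
        rw [this, ih hn, ← hApAn, ← pow_succ]
  refine Finset.sum_congr rfl fun l hl => ?_
  rw [key l (Finset.mem_Icc.mp hl).1]
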